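/- arXiv:math/0611779 — 2 statements merged into one kernel-verified Lean document; each statement's English description precedes it below -/
import Mathlib

section
/- Let E be a complex inner product space and K : E → E an antiunitary map with K ∘ K = −id. Then every finite-dimensional ℂ-linear subspace W of E with K(W) ⊆ W has even complex dimension. -/
set_option maxHeartbeats 1000000 in
/-- If `K` is an antiunitary map on a complex inner product space with `K ∘ K = -id`,
then every finite-dimensional `ℂ`-linear subspace invariant under `K` has even complex
dimension. -/
theorem antiunitary_invariant_subspace_even_dim
    {E : Type*} [NormedAddCommGroup E] [InnerProductSpace ℂ E] (K : E → E)
    (hadd : ∀ x y : E, K (x + y) = K x + K y)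
    (hsmul : ∀ (c : ℂ) (x : E), K (c • x) = (starRingEnd ℂ c) • K x)
    (hinner : ∀ x y : E, (inner ℂ (K x) (K y) : ℂ) = inner ℂ y x)
    (hKK : ∀ x : E, K (K x) = -x)
    (W : Submodule ℂ E) (hWfin : FiniteDimensional ℂ W) (hW : ∀ x ∈ W, K x ∈ W) :
    Even (Module.finrank ℂ W) := by
  classical
  -- the "i" endomorphism (mult by Complex.I), ℝ-linear on W
  let i : Module.End ℝ W :=
    { toFun := fun x => Complex.I • x
      map_add' := fun x y => smul_add _ _ _
      map_smul' := fun r x => (smul_comm (r : ℝ) Complex.I x).symm }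
  -- the "j" endomorphism: K restricted to W
  let j : Module.End ℝ W :=
    { toFun := fun x => ⟨K x, hW x x.2⟩
      map_add' := fun x y => Subtype.ext (by simp [hadd])
      map_smul' := fun r x => Subtype.ext (by
        have : ((r • x : W) : E) = (r : ℂ) • (x : E) := by
          simp [Submodule.coe_smul]
        simp only [this, hsmul, RingHom.id_apply]
        simp [Complex.conj_ofReal]) }
  have hji : ∀ x : W, j (i x) = - i (j x) := by
    intro x
    apply Subtype.ext
    show K (Complex.I • (x : E)) = -(Complex.I • K (x : E))
    rw [hsmul]
    simp
  have hii : i * i = (-1 : ℝ) • (1 : Module.End ℝ W) := by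
    ext x
    refine congrArg _ (?_ : (i * i) x = ((-1 : ℝ) • (1 : Module.End ℝ W)) x)
    show Complex.I • Complex.I • x = (-1 : ℝ) • x
    rw [smul_smul, Complex.I_mul_I]
    simp [neg_smul]
  have hjj : j * j = (-1 : ℝ) • (1 : Module.End ℝ W) := by
    ext x
    refine congrArg _ (?_ : (j * j) x = ((-1 : ℝ) • (1 : Module.End ℝ W)) x)
    apply Subtype.ext
    show K (K (x : E)) = ((((-1 : ℝ) • x : W)) : E)
    rw [hKK]
    simp
  let b : QuaternionAlgebra.Basis (R := ℝ) (Module.End ℝ W) (-1) 0 (-1) :=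
    { i := i, j := j, k := i * j
      i_mul_i := by rw [zero_smul, add_zero]; exact hii
      j_mul_j := hjj
      i_mul_j := rfl
      j_mul_i := by
        rw [zero_smul, zero_sub]
        ext x
        exact congrArg _ (hji x) }
  let Q : (Quaternion ℝ) →ₐ[ℝ] Module.End ℝ W := b.liftHom
  letI : Module (Quaternion ℝ) W := Module.compHom W Q.toRingHom
  have hsmul_def : ∀ (q : (Quaternion ℝ)) (x : W), q • x = Q q x := fun _ _ => rfl
  letI : IsScalarTower ℝ (Quaternion ℝ) W := ⟨by
    intro r q x
    rw [hsmul_def, hsmul_def, show Q (r • q) = r • Q q from Q.toLinearMap.map_smul r q]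
    rfl⟩
  haveI : FiniteDimensional ℝ W := FiniteDimensional.trans ℝ ℂ W
  haveI : Module.Finite (Quaternion ℝ) W := Module.Finite.of_restrictScalars_finite ℝ (Quaternion ℝ) W
  have h1 : Module.finrank ℝ (Quaternion ℝ) * Module.finrank (Quaternion ℝ) W = Module.finrank ℝ W :=
    Module.finrank_mul_finrank ℝ (Quaternion ℝ) W
  have h2 : Module.finrank ℝ ℂ * Module.finrank ℂ W = Module.finrank ℝ W :=
    Module.finrank_mul_finrank ℝ ℂ W
  rw [Quaternion.finrank_eq_four] at h1
  rw [Complex.finrank_real_complex] at h2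
  refine ⟨Module.finrank (Quaternion ℝ) W, ?_⟩
  omega
end

section
/- (Kramers degeneracy.) Let E be a complex inner product space, K : E → E an antiunitary map with K ∘ K = −id, and A : E → E a ℂ-linear map commuting with K (i.e. A(Kx) = K(Ax) for all x). Then for every real number λ, the eigenspace {x ∈ E : Ax = λx} is invariant under K; consequently, if this eigenspace is finite-dimensional, its complex dimension is even. -/
open Module

private lemma kramers_aux : ∀ (n : ℕ) {V : Type*} [NormedAddCommGroup V] [InnerProductSpace ℂ V]
    [FiniteDimensional ℂ V] (J : V → V),
    (∀ x y : V, J (x + y) = J x + J y) →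
    (∀ (c : ℂ) (x : V), J (c • x) = (starRingEnd ℂ c) • J x) →
    (∀ x y : V, (inner ℂ (J x) (J y) : ℂ) = inner ℂ y x) →
    (∀ x : V, J (J x) = -x) →
    Module.finrank ℂ V = n → Even n := by
  intro n
  induction n using Nat.strong_induction_on with
  | _ n ih =>
    intro V _ _ _ J hadd hsmul hinner hJJ hrank
    rcases Nat.eq_zero_or_pos n with h0 | hpos
    · simp [h0]
    have hVnt : Nontrivial V := by
      have := Module.finrank_pos_iff (R := ℂ) (M := V)
      rw [hrank] at this
      exact this.mp hpos
    obtain ⟨x, hx⟩ := exists_ne (0 : V)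
    obtain ⟨u, hu⟩ : ∃ u : V, ‖u‖ = 1 := ⟨(‖x‖⁻¹ : ℂ) • x, norm_smul_inv_norm hx⟩
    have hJu : ‖J u‖ = 1 := by
      have h1 : (inner ℂ (J u) (J u) : ℂ) = inner ℂ u u := hinner u u
      rw [inner_self_eq_norm_sq_to_K, inner_self_eq_norm_sq_to_K] at h1
      have h3 : ‖J u‖^2 = ‖u‖^2 := by exact_mod_cast h1
      nlinarith [norm_nonneg (J u), norm_nonneg u]
    have hperp : (inner ℂ (J u) u : ℂ) = 0 := by
      have := hinner u (J u)
      rw [hJJ u, inner_neg_right] at this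
      linear_combination (-(1:ℂ)/2) * this
    have hperp' : (inner ℂ u (J u) : ℂ) = 0 := by
      rw [← inner_conj_symm, hperp, map_zero]
    have horth : Orthonormal ℂ ![u, J u] := by
      constructor
      · intro i
        fin_cases i
        · simpa using hu
        · simpa using hJu
      · intro i j hij
        fin_cases i <;> fin_cases j <;> simp_all
    have hli := horth.linearIndependent
    set S : Submodule ℂ V := Submodule.span ℂ (Set.range ![u, J u]) with hS_def
    have hS2 : finrank ℂ S = 2 := by
      rw [finrank_span_eq_card hli]
      simp
    have huS : u ∈ S := Submodule.subset_span ⟨0, rfl⟩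
    have hJuS : J u ∈ S := Submodule.subset_span ⟨1, rfl⟩
    have hmem : ∀ w : V, w ∈ Sᗮ → J w ∈ Sᗮ := by
      intro w hw
      have hu_w : (inner ℂ u w : ℂ) = 0 := hw u huS
      have hJu_w : (inner ℂ (J u) w : ℂ) = 0 := hw (J u) hJuS
      have h1 : (inner ℂ u (J w) : ℂ) = 0 := by
        have hh : (inner ℂ (J (J u)) (J w) : ℂ) = inner ℂ w (J u) := hinner (J u) w
        rw [hJJ u, inner_neg_left] at hh
        have h2 : (inner ℂ w (J u) : ℂ) = 0 := by
          rw [← inner_conj_symm, hJu_w, map_zero]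
        rw [h2] at hh
        exact neg_eq_zero.mp hh
      have h3 : (inner ℂ (J u) (J w) : ℂ) = 0 := by
        rw [hinner u w, ← inner_conj_symm, hu_w, map_zero]
      intro v hv
      obtain ⟨c, rfl⟩ := (Submodule.mem_span_range_iff_exists_fun ℂ).mp hv
      rw [Fin.sum_univ_two]
      simp only [Matrix.cons_val_zero, Matrix.cons_val_one, Matrix.head_cons]
      rw [inner_add_left, inner_smul_left, inner_smul_left, h1, h3]
      ring
    -- restrict J to the orthogonal complement
    set J' : (Sᗮ : Submodule ℂ V) → Sᗮ := fun w => ⟨J w.1, hmem w.1 w.2⟩ with hJ'_def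
    have hm : Even (finrank ℂ (Sᗮ : Submodule ℂ V)) := by
      refine ih (finrank ℂ (Sᗮ : Submodule ℂ V)) ?_ J' ?_ ?_ ?_ ?_ rfl
      · have := Submodule.finrank_add_finrank_orthogonal (K := S)
        omega
      · intro a b; apply Subtype.ext; exact hadd a.1 b.1
      · intro c a; apply Subtype.ext; exact hsmul c a.1
      · intro a b; exact hinner a.1 b.1
      · intro a; apply Subtype.ext; exact hJJ a.1
    have htot := Submodule.finrank_add_finrank_orthogonal (K := S)
    rw [hS2, hrank] at htot
    rw [Nat.even_iff] at hm ⊢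
    omega

/-- Kramers degeneracy: if `K` is antiunitary with `K ∘ K = -id` and `A` is a `ℂ`-linear
map commuting with `K`, then for every real `λ` the eigenspace `{x | A x = λ x}` is
invariant under `K`; if it is finite-dimensional, its complex dimension is even. -/
theorem kramers_degeneracy
    {E : Type*} [NormedAddCommGroup E] [InnerProductSpace ℂ E] (K : E → E)
    (hadd : ∀ x y : E, K (x + y) = K x + K y)
    (hsmul : ∀ (c : ℂ) (x : E), K (c • x) = (starRingEnd ℂ c) • K x)
    (hinner : ∀ x y : E, (inner ℂ (K x) (K y) : ℂ) = inner ℂ y x)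
    (hKK : ∀ x : E, K (K x) = -x)
    (A : E →ₗ[ℂ] E) (hAK : ∀ x : E, A (K x) = K (A x)) (lam : ℝ) :
    (∀ x ∈ Module.End.eigenspace (A : Module.End ℂ E) (lam : ℂ),
        K x ∈ Module.End.eigenspace (A : Module.End ℂ E) (lam : ℂ)) ∧
    (FiniteDimensional ℂ (Module.End.eigenspace (A : Module.End ℂ E) (lam : ℂ)) →
        Even (Module.finrank ℂ (Module.End.eigenspace (A : Module.End ℂ E) (lam : ℂ)))) := by
  have part1 : ∀ x ∈ Module.End.eigenspace (A : Module.End ℂ E) (lam : ℂ),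
      K x ∈ Module.End.eigenspace (A : Module.End ℂ E) (lam : ℂ) := by
    intro x hx
    rw [Module.End.mem_eigenspace_iff] at hx ⊢
    rw [hAK x, hx, hsmul]
    congr 1
    simp [Complex.conj_ofReal]
  refine ⟨part1, ?_⟩
  intro hfd
  set V := Module.End.eigenspace (A : Module.End ℂ E) (lam : ℂ) with hV_def
  set J : V → V := fun v => ⟨K v.1, part1 v.1 v.2⟩ with hJ_def
  refine kramers_aux (finrank ℂ V) J ?_ ?_ ?_ ?_ rfl
  · intro a b; apply Subtype.ext; exact hadd a.1 b.1
  · intro c a; apply Subtype.ext; exact hsmul c a.1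
  · intro a b; exact hinner a.1 b.1
  · intro a; apply Subtype.ext; exact hKK a.1
end
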